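/- Let d ≥ 1, ϑ ∈ (0, π/2], and let Γ be a ϑ-bounded configuration. Then for every r ≥ 0, every R > (√d + r)/sin(ϑ), and every lattice point x ∈ ℤ^d, there exists an r-R-connected lattice point y ∈ ℤ^d with |y − x| < R. -/

import Mathlib

open MeasureTheory Metric
open scoped ENNReal

noncomputable section

/-- `d`-dimensional Euclidean space. -/
abbrev Euc (d : ℕ) : Type := EuclideanSpace ℝ (Fin d)

/-- The open cone `Ṽ(v,θ)` with axis `v` and apex angle `θ`. -/
def coneSet (d : ℕ) (v : Euc d) (θ : ℝ) : Set (Euc d) :=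
  {h | h ≠ 0 ∧ Real.cos θ < (inner ℝ v h : ℝ) / ‖h‖}

/-- The double cone `V(v,θ) = Ṽ(v,θ) ∪ (−Ṽ(v,θ))`. -/
def doubleCone (d : ℕ) (v : Euc d) (θ : ℝ) : Set (Euc d) :=
  {h | h ∈ coneSet d v θ ∨ -h ∈ coneSet d v θ}

/-- A configuration assigns to each point of `ℝ^d` a double cone with apex at `0`,
recorded via its (unit) symmetry axis and its apex angle in `(0, π/2]`. -/
structure Config (d : ℕ) where
  axis : Euc d → Euc d
  angle : Euc d → ℝ
  axis_norm : ∀ x, ‖axis x‖ = 1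
  angle_mem : ∀ x, angle x ∈ Set.Ioc 0 (Real.pi / 2)

/-- The double cone `Γ(x)` assigned to `x` by a configuration `Γ`. -/
def Config.cone {d : ℕ} (Γ : Config d) (x : Euc d) : Set (Euc d) :=
  doubleCone d (Γ.axis x) (Γ.angle x)

/-- `Γ` is `ϑ`-bounded: every apex angle is at least `ϑ`. -/
def Config.Bounded {d : ℕ} (Γ : Config d) (ϑ : ℝ) : Prop :=
  ∀ x, ϑ ≤ Γ.angle x

/-- `Γ` is `ϑ`-admissible: `ϑ`-bounded and `{(x,y) | y - x ∈ Γ(x)}` is Borel. -/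
def Config.Admissible {d : ℕ} (Γ : Config d) (ϑ : ℝ) : Prop :=
  Γ.Bounded ϑ ∧ MeasurableSet {p : Euc d × Euc d | p.2 - p.1 ∈ Γ.cone p.1}

/-- The indicator sum `𝟙_{V^Γ[x]}(y) + 𝟙_{V^Γ[y]}(x)`, valued in `ℝ≥0∞`. -/
def indSum {d : ℕ} (Γ : Config d) (x y : Euc d) : ℝ≥0∞ :=
  (Γ.cone x).indicator (fun _ => (1 : ℝ≥0∞)) (y - x) +
  (Γ.cone y).indicator (fun _ => (1 : ℝ≥0∞)) (x - y)

/-- The kernel `|x - y| ^ (-d-α)` as an `ℝ≥0∞`-valued function (equal to `∞` on the diagonal). -/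
def stbl (d : ℕ) (α : ℝ) (x y : Euc d) : ℝ≥0∞ :=
  (ENNReal.ofReal (dist x y)) ^ (-(d : ℝ) - α)

/-- The embedding of the integer lattice `ℤ^d` into `ℝ^d`. -/
def latt (d : ℕ) (z : Fin d → ℤ) : Euc d :=
  (WithLp.equiv 2 (Fin d → ℝ)).symm (fun i => (z i : ℝ))

/-- The open cube `A_h(u)` of side length `h` centered at `u` (w.r.t. the max norm). -/
def cube (d : ℕ) (h : ℝ) (u : Euc d) : Set (Euc d) :=
  {x | ∀ i, |x i - u i| < h / 2}

/-- The translate `V[x] = V + x` of a set `V`. -/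
def shiftSet (d : ℕ) (V : Set (Euc d)) (x : Euc d) : Set (Euc d) :=
  {y | y - x ∈ V}

/-- The "half-set" `V_r = {y ∈ V | closedBall y r ⊆ V}` (double half-cone for `V` a double cone). -/
def halfSet (d : ℕ) (V : Set (Euc d)) (r : ℝ) : Set (Euc d) :=
  {y | y ∈ V ∧ Metric.closedBall y r ⊆ V}

/-- Adjacency of `w` and `z` in the (undirected) graph `G_U(Γ)`. -/
def adjIn (d : ℕ) (Γ : Config d) (U : Set (Euc d)) (w z : Euc d) : Prop :=
  (w ∈ U ∧ z - w ∈ Γ.cone w) ∨ (z ∈ U ∧ w - z ∈ Γ.cone z)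

/-- Adjacency of two lattice points in the graph `G(Γ)`. -/
def adjL (d : ℕ) (Γ : Config d) (w z : Fin d → ℤ) : Prop :=
  latt d z - latt d w ∈ Γ.cone (latt d w) ∨ latt d w - latt d z ∈ Γ.cone (latt d z)

/-- A lattice point `x` is `r`-`R`-connected if every lattice point within distance `r`
is connected to `x` by an undirected edge path in `G(Γ)` staying in the closed `R`-ball
around `x`. -/
def rRConnected (d : ℕ) (Γ : Config d) (r R : ℝ) (x : Fin d → ℤ) : Prop :=
  ∀ y : Fin d → ℤ, dist (latt d y) (latt d x) ≤ r →
    ∃ (N : ℕ) (p : ℕ → Fin d → ℤ), p 0 = x ∧ p N = y ∧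
      (∀ i < N, adjL d Γ (p i) (p (i + 1))) ∧
      ∀ i ≤ N, dist (latt d (p i)) (latt d x) ≤ R

/-- Sum over pairs of lattice points satisfying a predicate `P` of
`(f x - f y)² K x y`, valued in `ℝ≥0∞`. -/
def dSum (d : ℕ) (f : (Fin d → ℤ) → ℝ) (K : (Fin d → ℤ) → (Fin d → ℤ) → ℝ≥0∞)
    (P : (Fin d → ℤ) → (Fin d → ℤ) → Prop) : ℝ≥0∞ :=
  ∑' q : (Fin d → ℤ) × (Fin d → ℤ),
    Set.indicator {q : (Fin d → ℤ) × (Fin d → ℤ) | P q.1 q.2}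
      (fun q => ENNReal.ofReal ((f q.1 - f q.2) ^ 2) * K q.1 q.2) q


/-- Any point of the open ball of radius `t sin θ` around `t • a` lies in the cone. -/
lemma mem_coneSet_of_close (d : ℕ) (a : Euc d) (ha : ‖a‖ = 1) (θ t : ℝ)
    (hθ1 : 0 < θ) (hθ2 : θ ≤ Real.pi / 2) (ht : 0 < t) (h : Euc d)
    (hh : ‖h - t • a‖ < t * Real.sin θ) : h ∈ coneSet d a θ := by
  set s := Real.sin θ with hsdef
  set c := Real.cos θ with hcdef
  have hs0 : 0 < s := Real.sin_pos_of_pos_of_lt_pi hθ1 (by linarith [Real.pi_pos])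
  have hs1 : s ≤ 1 := Real.sin_le_one θ
  have hc0 : 0 ≤ c := Real.cos_nonneg_of_mem_Icc ⟨by linarith, hθ2⟩
  have hpyth : s^2 + c^2 = 1 := Real.sin_sq_add_cos_sq θ
  set e := h - t • a with he
  set α := (inner ℝ a e : ℝ) with hα
  set m := ‖e‖ with hm
  have hm0 : (0:ℝ) ≤ m := norm_nonneg e
  have hmts : m < t * s := hh
  have hαm : |α| ≤ m := by
    calc |α| ≤ ‖a‖ * ‖e‖ := abs_real_inner_le_norm a e
      _ = m := by rw [ha, one_mul]
  have habs := abs_le.mp hαm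
  have haa : (inner ℝ a a : ℝ) = 1 := by
    rw [real_inner_self_eq_norm_sq, ha]; norm_num
  have hih : (inner ℝ a h : ℝ) = t + α := by
    have h2 : (inner ℝ a (h - t • a) : ℝ) = (inner ℝ a h : ℝ) - t * (inner ℝ a a : ℝ) := by
      rw [inner_sub_right, real_inner_smul_right]
    rw [haa, mul_one] at h2
    rw [hα, he, h2]; ring
  have hN : ‖h‖^2 = t^2 + 2*t*α + m^2 := by
    have hh' : h = t • a + e := by rw [he]; abel
    rw [hh', norm_add_sq_real, norm_smul, real_inner_smul_left, ha,
      Real.norm_eq_abs, abs_of_pos ht, ← hα, ← hm]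
    ring
  have hN0 : (0:ℝ) ≤ ‖h‖ := norm_nonneg h
  have htα : 0 < t + α := by nlinarith
  have key : c * ‖h‖ < t + α := by
    rcases eq_or_lt_of_le hc0 with hc | hc
    · rw [← hc, zero_mul]; exact htα
    · have h2 : 0 < t*s - m := by linarith
      have h3 : 0 < t*s + m := by nlinarith
      have hid : (t+α)^2 - (c*‖h‖)^2 = (t*s^2+α)^2 + c^2*((t*s)^2 - m^2) := by
        linear_combination (-(c^2)) * hN + (-(t^2*(1+s^2)+2*t*α)) * hpyth
      have h4 : 0 < c^2*((t*s)^2 - m^2) := by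
        have h5 : 0 < (t*s)^2 - m^2 := by nlinarith
        positivity
      have h1 : (c*‖h‖)^2 < (t+α)^2 := by
        linarith [hid, sq_nonneg (t*s^2 + α), h4]
      by_contra hk
      push_neg at hk
      have h6 := pow_le_pow_left₀ (le_of_lt htα) hk 2
      linarith
  have hh0 : h ≠ 0 := by
    intro h0
    rw [h0, inner_zero_right] at hih
    rw [h0, norm_zero, mul_zero, ← hih] at key
    exact lt_irrefl 0 key
  refine ⟨hh0, ?_⟩
  rw [lt_div_iff₀ (norm_pos_iff.mpr hh0), hih]
  exact key

/-- Rounding coordinates gives a lattice point within distance `√d / 2`. -/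
lemma latt_round_close (d : ℕ) (c : Euc d) :
    ‖latt d (fun i => round (c i)) - c‖ ≤ Real.sqrt d / 2 := by
  have h2 : Real.sqrt ((d:ℝ) * (1/2)^2) = Real.sqrt d / 2 := by
    have h4 : (Real.sqrt d / 2)^2 = (d:ℝ) * (1/2)^2 := by
      rw [div_pow, Real.sq_sqrt (Nat.cast_nonneg d)]; ring
    rw [← h4]
    exact Real.sqrt_sq (by positivity)
  rw [← h2, EuclideanSpace.norm_eq]
  apply Real.sqrt_le_sqrt
  have hb : ∀ i : Fin d, ‖(latt d (fun i => round (c i)) - c) i‖^2 ≤ (1/2:ℝ)^2 := by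
    intro i
    have h2' : (latt d (fun i => round (c i)) - c) i = (round (c i) : ℝ) - c i := by
      simp [latt, WithLp.equiv_symm_apply, PiLp.toLp_apply]
    rw [h2', Real.norm_eq_abs]
    have h3 : |(round (c i) : ℝ) - c i| ≤ 1/2 := by
      rw [abs_sub_comm]; exact abs_sub_round (c i)
    exact pow_le_pow_left₀ (abs_nonneg _) h3 2
  calc ∑ i, ‖(latt d (fun i => round (c i)) - c) i‖^2
      ≤ ∑ _i : Fin d, (1/2:ℝ)^2 := Finset.sum_le_sum (fun i _ => hb i)
    _ = (d:ℝ) * (1/2)^2 := by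
        rw [Finset.sum_const, Finset.card_univ, Fintype.card_fin, nsmul_eq_mul]

/-- Lemma 5.4: density of `r`-`R`-connected lattice points. -/
theorem stmt17 (d : ℕ) (hd : 1 ≤ d) (ϑ : ℝ) (hϑ : ϑ ∈ Set.Ioc 0 (Real.pi / 2))
    (Γ : Config d) (hΓ : Γ.Bounded ϑ) (r R : ℝ) (hr : 0 ≤ r)
    (hR : (Real.sqrt d + r) / Real.sin ϑ < R) (x : Fin d → ℤ) :
    ∃ y : Fin d → ℤ, dist (latt d y) (latt d x) < R ∧ rRConnected d Γ r R y := by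
  obtain ⟨hϑ0, hϑπ⟩ := hϑ
  have hs : 0 < Real.sin ϑ := Real.sin_pos_of_pos_of_lt_pi hϑ0 (by linarith [Real.pi_pos])
  have hs1 : Real.sin ϑ ≤ 1 := Real.sin_le_one ϑ
  have hd1 : (1:ℝ) ≤ Real.sqrt d := by
    rw [show (1:ℝ) = Real.sqrt 1 by simp]
    exact Real.sqrt_le_sqrt (by exact_mod_cast hd)
  set a := Γ.axis (latt d x) with hadef
  have ha : ‖a‖ = 1 := Γ.axis_norm _
  set θx := Γ.angle (latt d x) with hθxdef
  obtain ⟨hθx0, hθxπ⟩ := Γ.angle_mem (latt d x)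
  have hϑθ : ϑ ≤ θx := hΓ _
  have hsx : Real.sin ϑ ≤ Real.sin θx := by
    apply Real.strictMonoOn_sin.monotoneOn _ _ hϑθ
    · constructor <;> [linarith [Real.pi_pos]; linarith]
    · constructor <;> [linarith [Real.pi_pos]; linarith]
  set L := (r + Real.sqrt d / 2) / Real.sin ϑ with hLdef
  set U := R - Real.sqrt d / 2 with hUdef
  have hL0 : 0 < L := by
    apply div_pos _ hs; linarith
  have h7 : Real.sqrt d / 2 ≤ (Real.sqrt d / 2) / Real.sin ϑ := by
    rw [le_div_iff₀ hs]; nlinarith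
  have hsum : L + (Real.sqrt d / 2) / Real.sin ϑ = (Real.sqrt d + r) / Real.sin ϑ := by
    rw [hLdef, ← add_div]; ring_nf
  have hLU : L < U := by
    rw [hUdef]; linarith
  set t := (L + U) / 2 with htdef
  have htL : L < t := by rw [htdef]; linarith
  have htU : t < U := by rw [htdef]; linarith
  have ht0 : 0 < t := lt_trans hL0 htL
  have hLs : L * Real.sin ϑ = r + Real.sqrt d / 2 := div_mul_cancel₀ _ (ne_of_gt hs)
  have htsin : r + Real.sqrt d / 2 < t * Real.sin θx := by
    calc r + Real.sqrt d / 2 = L * Real.sin ϑ := hLs.symm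
      _ < t * Real.sin ϑ := by exact mul_lt_mul_of_pos_right htL hs
      _ ≤ t * Real.sin θx := by
          apply mul_le_mul_of_nonneg_left hsx (le_of_lt ht0)
  set cpt : Euc d := latt d x + t • a with hcpt
  set y : Fin d → ℤ := fun i => round (cpt i) with hydef
  have hyc : ‖latt d y - cpt‖ ≤ Real.sqrt d / 2 := latt_round_close d cpt
  -- key: any lattice point near cpt lies in the cone of x.
  have key : ∀ z : Fin d → ℤ, ‖latt d z - cpt‖ < t * Real.sin θx →
      latt d z - latt d x ∈ Γ.cone (latt d x) := by
    intro z hz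
    have hmem : latt d z - latt d x ∈ coneSet d a θx := by
      apply mem_coneSet_of_close d a ha θx t hθx0 hθxπ ht0
      have heq : latt d z - latt d x - t • a = latt d z - cpt := by
        rw [hcpt]; abel
      rw [heq]; exact hz
    exact Or.inl hmem
  have hyedge : latt d y - latt d x ∈ Γ.cone (latt d x) := by
    apply key
    calc ‖latt d y - cpt‖ ≤ Real.sqrt d / 2 := hyc
      _ ≤ r + Real.sqrt d / 2 := by linarith
      _ < t * Real.sin θx := htsin
  have hxy : dist (latt d x) (latt d y) ≤ t + Real.sqrt d / 2 := by
    rw [dist_eq_norm]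
    calc ‖latt d x - latt d y‖ ≤ ‖latt d x - cpt‖ + ‖cpt - latt d y‖ := by
          have : latt d x - latt d y = (latt d x - cpt) + (cpt - latt d y) := by abel
          rw [this]; exact norm_add_le _ _
      _ ≤ t + Real.sqrt d / 2 := by
          have e1 : ‖latt d x - cpt‖ = t := by
            rw [hcpt]
            have : latt d x - (latt d x + t • a) = -(t • a) := by abel
            rw [this, norm_neg, norm_smul, ha, Real.norm_eq_abs, abs_of_pos ht0, mul_one]
          have e2 : ‖cpt - latt d y‖ = ‖latt d y - cpt‖ := norm_sub_rev _ _
          rw [e1, e2]; linarith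
  have hR0 : (0:ℝ) < R := by
    apply lt_of_le_of_lt _ hR
    positivity
  have hrR : r ≤ R := by
    have : r ≤ (Real.sqrt d + r) / Real.sin ϑ := by
      rw [le_div_iff₀ hs]; nlinarith
    linarith
  have hdistyx : dist (latt d y) (latt d x) < R := by
    rw [dist_comm]
    calc dist (latt d x) (latt d y) ≤ t + Real.sqrt d / 2 := hxy
      _ < U + Real.sqrt d / 2 := by linarith
      _ = R := by rw [hUdef]; ring
  refine ⟨y, hdistyx, ?_⟩
  intro z hz
  have hzx : latt d z - latt d x ∈ Γ.cone (latt d x) := by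
    apply key
    calc ‖latt d z - cpt‖ ≤ ‖latt d z - latt d y‖ + ‖latt d y - cpt‖ := by
          have : latt d z - cpt = (latt d z - latt d y) + (latt d y - cpt) := by abel
          rw [this]; exact norm_add_le _ _
      _ ≤ r + Real.sqrt d / 2 := by
          rw [dist_eq_norm] at hz; linarith
      _ < t * Real.sin θx := htsin
  refine ⟨2, fun n => if n = 0 then y else if n = 1 then x else z, by norm_num, by norm_num, ?_, ?_⟩
  · intro i hi
    interval_cases i
    · show adjL d Γ y x
      exact Or.inr hyedge
    · show adjL d Γ x z
      exact Or.inl hzx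
  · intro i hi
    interval_cases i
    · show dist (latt d y) (latt d y) ≤ R
      rw [dist_self]; linarith
    · show dist (latt d x) (latt d y) ≤ R
      rw [dist_comm]
      linarith [hdistyx]
    · show dist (latt d z) (latt d y) ≤ R
      linarith [hz, hrR]
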